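/- arXiv:2306.09293 — 5 statements merged into one kernel-verified Lean document; each statement's English description precedes it below -/
import Mathlib

section
/- Suppose for every layer l and node p, the weighted sum over active nodes satisfies Σ_{i∈↑^l_p} a^{l-1}_i W^l_{i,p} = c · Σ_{i∉↑^l_p} a^{l-1}_i W^l_{i,p} for a fixed constant c > 0. Then the exact activation satisfies a^k_j = ā^k_j · ((c+1)/c)^k, so the error e^k_j = ā^k_j · (((c+1)/c)^k − 1) grows exponentially in the depth k. -/
/-- Paper's Theorem: under the constant active-to-inactive ratio assumption,
the exact activation is `((c+1)/c)^k` times the estimate, so the error grows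
exponentially with the depth `k`. -/
theorem exponential_error
    (n : ℕ) (x : Fin n → ℝ)
    (W : ℕ → Matrix (Fin n) (Fin n) ℝ)
    (up : ℕ → Fin n → Finset (Fin n))
    (a abar e : ℕ → Fin n → ℝ)
    (c : ℝ) (hc : 0 < c)
    (ha0 : ∀ j, a 0 j = x j)
    (ha : ∀ k j, a (k + 1) j = ∑ i, a k i * W (k + 1) i j)
    (hab0 : ∀ j, abar 0 j = x j)
    (hab : ∀ k j, abar (k + 1) j = ∑ i ∈ up (k + 1) j, abar k i * W (k + 1) i j)
    (he : ∀ k j, e k j = a k j - abar k j)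
    (hratio : ∀ k p, ∑ i ∈ up (k + 1) p, a k i * W (k + 1) i p
      = c * ∑ i ∈ (up (k + 1) p)ᶜ, a k i * W (k + 1) i p) :
    ∀ k j, a k j = abar k j * ((c + 1) / c) ^ k ∧
      e k j = abar k j * (((c + 1) / c) ^ k - 1) := by

  have key : ∀ k j, a k j = abar k j * ((c + 1) / c) ^ k := by
    intro k
    induction k with
    | zero => intro j; simp [ha0, hab0]
    | succ k ih =>
      intro j
      have hsplit : (∑ i, a k i * W (k + 1) i j)
          = (∑ i ∈ up (k + 1) j, a k i * W (k + 1) i j)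
            + ∑ i ∈ (up (k + 1) j)ᶜ, a k i * W (k + 1) i j :=
        (Finset.sum_add_sum_compl _ _).symm
      have hcomp : ∑ i ∈ (up (k + 1) j)ᶜ, a k i * W (k + 1) i j
          = (1 / c) * ∑ i ∈ up (k + 1) j, a k i * W (k + 1) i j := by
        rw [hratio k j]; field_simp
      have hsum : ∑ i ∈ up (k + 1) j, a k i * W (k + 1) i j
          = ((c + 1) / c) ^ k * ∑ i ∈ up (k + 1) j, abar k i * W (k + 1) i j := by
        rw [Finset.mul_sum]
        apply Finset.sum_congr rfl
        intro i _
        rw [ih i]; ring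
      rw [ha, hsplit, hcomp, hsum, hab]
      field_simp
      have h1 : c * c⁻¹ = 1 := mul_inv_cancel₀ hc.ne'
      linear_combination (-(1 + c) * (∑ i ∈ up (k + 1) j, abar k i * W (k + 1) i j) * ((c + 1) / c) ^ k) * h1
  intro k j
  refine ⟨key k j, ?_⟩
  rw [he, key k j]
  ring
end

section
/- The expected squared Frobenius error E[‖AB − CR‖_F²] of the c-sample importance-sampling estimator CR = (1/c) Σ_{t=1}^c (1/p_{i_t}) A_{:,i_t} B_{i_t,:}, where indices i_t are i.i.d. with P(i_t = i) = p_i, is minimized over probability distributions (p_1,…,p_n) by p_i = ‖A_{:,i}‖‖B_{i,:}‖ / Σ_{t'} ‖A_{:,t'}‖‖B_{t',:}‖. -/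
/-- The expected squared Frobenius error
`E[‖AB - CR‖_F²] = (1/c)(∑ i aᵢ²/pᵢ - ‖AB‖_F²)` of the `c`-sample
importance-sampling estimator is minimized over probability distributions by
`p i = aᵢ / ∑ j aⱼ`, where `aᵢ = ‖A_{:,i}‖ ‖B_{i,:}‖`. -/
theorem optimal_distribution_minimizes_error (m n q c : ℕ) (hc : 1 ≤ c)
    (A : Matrix (Fin m) (Fin n) ℝ) (B : Matrix (Fin n) (Fin q) ℝ)
    (a : Fin n → ℝ)
    (ha : ∀ i, a i = Real.sqrt (∑ r, A r i ^ 2) * Real.sqrt (∑ cc, B i cc ^ 2))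
    (hT : ∑ t, a t ≠ 0) :
    ∀ p : Fin n → ℝ, (∀ i, 0 ≤ p i) → (∑ i, p i = 1) →
      (∀ i, 0 < a i → 0 < p i) →
      (1 / c : ℝ) * ((∑ i, a i ^ 2 / (a i / ∑ t, a t)) - ∑ r, ∑ cc, (A * B) r cc ^ 2)
        ≤ (1 / c : ℝ) * ((∑ i, a i ^ 2 / p i) - ∑ r, ∑ cc, (A * B) r cc ^ 2) := by
  intro p hp hsum hpa
  have hanon : ∀ i, 0 ≤ a i := fun i =>
    (ha i) ▸ mul_nonneg (Real.sqrt_nonneg _) (Real.sqrt_nonneg _)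
  set T := ∑ t, a t with hT'
  have hTpos : 0 < T :=
    lt_of_le_of_ne (Finset.sum_nonneg fun i _ => hanon i) (Ne.symm hT)
  -- value at the optimal distribution is T²
  have hL : ∑ i, a i ^ 2 / (a i / T) = T ^ 2 := by
    have h : ∀ i, a i ^ 2 / (a i / T) = a i * T := by
      intro i
      rcases eq_or_lt_of_le (hanon i) with h | h
      · simp [← h]
      · have hne : a i ≠ 0 := ne_of_gt h
        field_simp
    rw [Finset.sum_congr rfl fun i _ => h i, ← Finset.sum_mul, ← hT']
    ring
  -- a i = 0 whenever p i = 0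
  have hap : ∀ i, p i = 0 → a i = 0 := by
    intro i hpi
    by_contra h
    have h2 := hpa i (lt_of_le_of_ne (hanon i) (Ne.symm h))
    rw [hpi] at h2
    exact lt_irrefl 0 h2
  -- Cauchy–Schwarz : T² ≤ ∑ a²/p
  have key : T ^ 2 ≤ ∑ i, a i ^ 2 / p i := by
    have cs := Finset.sum_mul_sq_le_sq_mul_sq Finset.univ
      (fun i => Real.sqrt (p i)) (fun i => a i / Real.sqrt (p i))
    have h1 : ∀ i : Fin n, Real.sqrt (p i) * (a i / Real.sqrt (p i)) = a i := by
      intro i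
      rcases eq_or_lt_of_le (hp i) with h | h
      · simp [← h, hap i h.symm]
      · rw [mul_div_cancel₀ _ (by positivity)]
    have h2 : ∀ i : Fin n, (Real.sqrt (p i)) ^ 2 = p i := fun i => Real.sq_sqrt (hp i)
    have h3 : ∀ i : Fin n, (a i / Real.sqrt (p i)) ^ 2 = a i ^ 2 / p i := by
      intro i
      rw [div_pow, h2]
    simp only [h1, h2, h3, hsum, one_mul] at cs
    exact cs
  have := sub_le_sub_right (hL ▸ key) (∑ r, ∑ cc, (A * B) r cc ^ 2)
  exact mul_le_mul_of_nonneg_left this (by positivity)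
end

section
/- For the asymmetric transformations P(w) = [w; ‖w‖^2, ‖w‖^4, …, ‖w‖^{2^m}] and Q(a) = [a; 1/2, …, 1/2], if ‖a‖ = 1 then ‖Q(a) − P(w)‖² = 1 + m/4 − 2⟨a, w⟩ + ‖w‖^{2^{m+1}}. -/
/-- The asymmetric transformation `P` appending `‖w‖^{2^1}, …, ‖w‖^{2^m}`. -/
noncomputable def Pmap (n m : ℕ) (w : EuclideanSpace ℝ (Fin n)) :
    EuclideanSpace ℝ (Fin n ⊕ Fin m) :=
  WithLp.toLp 2 (Sum.elim w fun j => ‖w‖ ^ 2 ^ ((j : ℕ) + 1))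

/-- The asymmetric transformation `Q` appending `m` copies of `1/2`. -/
noncomputable def Qmap (n m : ℕ) (a : EuclideanSpace ℝ (Fin n)) :
    EuclideanSpace ℝ (Fin n ⊕ Fin m) :=
  WithLp.toLp 2 (Sum.elim a fun _ => 1 / 2)

lemma euclid_norm_sq {k : ℕ} (x : EuclideanSpace ℝ (Fin k)) :
    ‖x‖ ^ 2 = ∑ i, (x i) ^ 2 := by
  rw [EuclideanSpace.norm_eq, Real.sq_sqrt (by positivity)]
  simp [sq_abs]

lemma euclid_norm_sq' {k l : ℕ} (x : EuclideanSpace ℝ (Fin k ⊕ Fin l)) :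
    ‖x‖ ^ 2 = ∑ i, (x i) ^ 2 := by
  rw [EuclideanSpace.norm_eq, Real.sq_sqrt (by positivity)]
  simp [sq_abs]

/-- For `‖a‖ = 1`,
`‖Q(a) - P(w)‖² = 1 + m/4 - 2⟨a, w⟩ + ‖w‖^{2^{m+1}}`. -/
theorem alsh_distance_identity (n m : ℕ)
    (a w : EuclideanSpace ℝ (Fin n)) (hna : ‖a‖ = 1) :
    ‖Qmap n m a - Pmap n m w‖ ^ 2
      = 1 + (m : ℝ) / 4 - 2 * (inner ℝ a w : ℝ) + ‖w‖ ^ 2 ^ (m + 1) := by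
  set r := ‖w‖ with hr
  have key : ‖Qmap n m a - Pmap n m w‖ ^ 2
      = ∑ i : Fin n, (a i - w i) ^ 2
        + ∑ j : Fin m, (1 / 2 - r ^ 2 ^ ((j : ℕ) + 1)) ^ 2 := by
    rw [euclid_norm_sq', Fintype.sum_sum_type]
    simp [Qmap, Pmap, hr]
  have h1 : ∑ i : Fin n, (a i - w i) ^ 2
      = 1 - 2 * (inner ℝ a w : ℝ) + r ^ 2 := by
    have : ∑ i : Fin n, (a i - w i) ^ 2 = ‖a - w‖ ^ 2 := by
      rw [euclid_norm_sq]
      simp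
    rw [this, norm_sub_sq_real, hna]
    ring
  have h2 : ∑ j : Fin m, (1 / 2 - r ^ 2 ^ ((j : ℕ) + 1)) ^ 2
      = (m : ℝ) / 4 - r ^ 2 + r ^ 2 ^ (m + 1) := by
    have hsq : ∀ j : ℕ, (r ^ 2 ^ (j + 1)) ^ 2 = r ^ 2 ^ (j + 2) := by
      intro j
      rw [← pow_mul, pow_succ (2 : ℕ) (j + 1)]
    have expand : ∀ j : ℕ, (1 / 2 - r ^ 2 ^ (j + 1)) ^ 2
        = 1 / 4 + (r ^ 2 ^ (j + 2) - r ^ 2 ^ (j + 1)) := by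
      intro j
      have := hsq j
      nlinarith [this]
    calc ∑ j : Fin m, (1 / 2 - r ^ 2 ^ ((j : ℕ) + 1)) ^ 2
        = ∑ j ∈ Finset.range m, (1 / 4 + (r ^ 2 ^ (j + 2) - r ^ 2 ^ (j + 1))) := by
          rw [Fin.sum_univ_eq_sum_range fun j => (1 / 2 - r ^ 2 ^ (j + 1)) ^ 2]
          exact Finset.sum_congr rfl fun j _ => expand j
      _ = (m : ℝ) / 4 + (r ^ 2 ^ (m + 1) - r ^ 2 ^ 1) := by
          rw [Finset.sum_add_distrib, Finset.sum_const, Finset.card_range]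
          congr 1
          · simp; ring
          · exact Finset.sum_range_sub (fun j => r ^ 2 ^ (j + 1)) m
      _ = (m : ℝ) / 4 - r ^ 2 + r ^ 2 ^ (m + 1) := by ring
  rw [key, h1, h2]; ring
end

section
/- With ‖a‖ = 1 and ‖w‖ ≤ C < 1 for all candidate vectors w, as m → ∞ the term ‖w‖^{2^{m+1}} → 0 uniformly, so for sufficiently large m the minimizer of ‖Q(a) − P(w)‖ over a finite set S of vectors with pairwise distinct inner products ⟨a,w⟩ coincides with the maximizer of ⟨a, w⟩ over S, provided the gap between the largest and second-largest inner product exceeds C^{2^{m+1}}/2. -/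
private theorem alsh_key (n m : ℕ) (a w : EuclideanSpace ℝ (Fin n)) :
    ‖Qmap n m a - Pmap n m w‖^2 =
      ‖a‖^2 + m/4 - 2*(inner ℝ a w : ℝ) + ‖w‖^(2^(m+1)) := by
  set f : ℕ → ℝ := fun j => ‖w‖ ^ 2 ^ (j+1) with hf
  have h1 : (inner ℝ (Qmap n m a) (Pmap n m w) : ℝ)
      = (inner ℝ a w : ℝ) + ∑ j : Fin m, (1/2) * f (j:ℕ) := by
    simp [Qmap, Pmap, PiLp.inner_apply, Fintype.sum_sum_type, RCLike.inner_apply, hf, mul_comm]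
  have hQ : ‖Qmap n m a‖^2 = ‖a‖^2 + m/4 := by
    rw [← real_inner_self_eq_norm_sq, ← real_inner_self_eq_norm_sq]
    simp [Qmap, PiLp.inner_apply, Fintype.sum_sum_type, RCLike.inner_apply, -inner_self_eq_norm_sq_to_K]
    ring
  have hP : ‖Pmap n m w‖^2 = ‖w‖^2 + ∑ j : Fin m, (f (j:ℕ))^2 := by
    rw [← real_inner_self_eq_norm_sq, ← real_inner_self_eq_norm_sq]
    simp [Pmap, PiLp.inner_apply, Fintype.sum_sum_type, RCLike.inner_apply, hf, ← pow_mul,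
      ← pow_add, -inner_self_eq_norm_sq_to_K]
    exact Finset.sum_congr rfl fun x _ => by rw [← two_mul]; ring_nf
  have hfs : ∀ j : ℕ, (f j)^2 = f (j+1) := by
    intro j
    simp only [hf, ← pow_mul]
    congr 1
  have htel : (∑ j : Fin m, (f (j:ℕ))^2) - ∑ j : Fin m, f (j:ℕ)
      = ‖w‖^(2^(m+1)) - ‖w‖^2 := by
    rw [Fin.sum_univ_eq_sum_range (fun j => (f j)^2), Fin.sum_univ_eq_sum_range f,
      ← Finset.sum_sub_distrib]
    simp_rw [hfs]
    rw [Finset.sum_range_sub f m]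
    simp [hf]
  have hsub : ‖Qmap n m a - Pmap n m w‖^2
      = ‖Qmap n m a‖^2 - 2 * (inner ℝ (Qmap n m a) (Pmap n m w) : ℝ) + ‖Pmap n m w‖^2 :=
    norm_sub_sq_real _ _
  rw [hsub, h1, hQ, hP]
  have h2 : ∑ j : Fin m, 1/2 * f (j:ℕ) = 1/2 * ∑ j : Fin m, f (j:ℕ) := by
    rw [Finset.mul_sum]
  linarith [htel, h2]

/-- With `‖a‖ = 1` and `‖w‖ ≤ C < 1` for all `w ∈ S`, the term `C^{2^{m+1}}`
tends to `0` as `m → ∞`, and whenever the gap between the largest and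
second-largest inner product exceeds `C^{2^{m+1}} / 2`, the minimizer of
`‖Q(a) - P(w)‖` over `S` is the maximizer of `⟨a, w⟩` over `S`. -/
theorem alsh_nns_solves_mips (n : ℕ) (C : ℝ) (hC0 : 0 ≤ C) (hC1 : C < 1)
    (a : EuclideanSpace ℝ (Fin n)) (hna : ‖a‖ = 1)
    (S : Finset (EuclideanSpace ℝ (Fin n)))
    (hS : ∀ w ∈ S, ‖w‖ ≤ C)
    (hdist : ∀ w ∈ S, ∀ w' ∈ S, w ≠ w' → (inner ℝ a w : ℝ) ≠ (inner ℝ a w' : ℝ)) :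
    Filter.Tendsto (fun m : ℕ => C ^ 2 ^ (m + 1)) Filter.atTop (nhds 0) ∧
    ∀ m : ℕ, ∀ wstar ∈ S,
      (∀ w ∈ S, w ≠ wstar →
        (inner ℝ a w : ℝ) + C ^ 2 ^ (m + 1) / 2 < (inner ℝ a wstar : ℝ)) →
      ∀ w ∈ S, w ≠ wstar →
        ‖Qmap n m a - Pmap n m wstar‖ < ‖Qmap n m a - Pmap n m w‖ := by
  constructor
  · have h1 : Filter.Tendsto (fun k : ℕ => C ^ k) Filter.atTop (nhds 0) :=
      tendsto_pow_atTop_nhds_zero_of_lt_one hC0 hC1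
    have h2 : Filter.Tendsto (fun m : ℕ => 2 ^ (m + 1)) Filter.atTop Filter.atTop :=
      (tendsto_pow_atTop_atTop_of_one_lt one_lt_two).comp
        (Filter.tendsto_add_atTop_nat 1)
    exact h1.comp h2
  · intro m wstar hws hgap w hw hne
    have hws' : ‖wstar‖ ^ 2 ^ (m + 1) ≤ C ^ 2 ^ (m + 1) :=
      pow_le_pow_left₀ (norm_nonneg _) (hS wstar hws) _
    have hw0 : (0:ℝ) ≤ ‖w‖ ^ 2 ^ (m + 1) := pow_nonneg (norm_nonneg _) _
    have hlt := hgap w hw hne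
    have hsq : ‖Qmap n m a - Pmap n m wstar‖ ^ 2 < ‖Qmap n m a - Pmap n m w‖ ^ 2 := by
      rw [alsh_key, alsh_key]
      linarith
    exact lt_of_pow_lt_pow_left₀ 2 (norm_nonneg _) hsq
end

section
/- For a random sign-projection hash h_v(x) = sign(⟨v, x⟩) with v drawn from a rotationally invariant distribution on ℝ^n, the collision probability of two nonzero vectors x, y is P[h_v(x) = h_v(y)] = 1 − θ(x,y)/π, where θ(x,y) is the angle between x and y. -/
open MeasureTheory Real Set

noncomputable section

namespace SignProjAux

local notation "⟪" x ", " y "⟫" => @inner ℝ _ _ x y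

instance : Fact (0 < 2 * Real.pi) := ⟨by positivity⟩
instance : MeasureSpace Real.Angle := inferInstanceAs (MeasureSpace (AddCircle (2 * Real.pi)))
instance : BorelSpace Real.Angle := inferInstanceAs (BorelSpace (AddCircle (2 * Real.pi)))
instance : CompactSpace Real.Angle := inferInstanceAs (CompactSpace (AddCircle (2 * Real.pi)))
instance : SecondCountableTopology Real.Angle :=
  inferInstanceAs (SecondCountableTopology (AddCircle (2 * Real.pi)))
instance : IsFiniteMeasure (volume : MeasureTheory.Measure Real.Angle) :=
  inferInstanceAs (IsFiniteMeasure (volume : MeasureTheory.Measure (AddCircle (2 * Real.pi))))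
instance : MeasureTheory.Measure.IsAddHaarMeasure (volume : MeasureTheory.Measure Real.Angle) :=
  inferInstanceAs
    (MeasureTheory.Measure.IsAddHaarMeasure (volume : MeasureTheory.Measure (AddCircle (2 * Real.pi))))

lemma measurable_sign : Measurable Real.sign := by
  have h : Real.sign = fun r : ℝ => if r < 0 then (-1 : ℝ) else if 0 < r then 1 else 0 := by
    funext r; rfl
  rw [h]
  exact Measurable.ite (measurableSet_Iio (a := (0:ℝ))) measurable_const
    (Measurable.ite (measurableSet_Ioi (a := (0:ℝ))) measurable_const measurable_const)

lemma sign_pos_mul {k : ℝ} (hk : 0 < k) (t : ℝ) : Real.sign (k * t) = Real.sign t := by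
  rcases lt_trichotomy t 0 with h | h | h
  · rw [Real.sign_of_neg h, Real.sign_of_neg (by nlinarith)]
  · simp [h]
  · rw [Real.sign_of_pos h, Real.sign_of_pos (by nlinarith)]

lemma cos_sign_cases {u : ℝ} (hl : -(π + π / 2) < u) (hu : u < π + π / 2)
    (hne1 : u ≠ -(π / 2)) (hne2 : u ≠ π / 2) :
    (0 < Real.cos u ∧ -(π / 2) < u ∧ u < π / 2) ∨
      (Real.cos u < 0 ∧ (u < -(π / 2) ∨ π / 2 < u)) := by
  rcases lt_trichotomy u (-(π / 2)) with h | h | h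
  · right
    refine ⟨?_, Or.inl h⟩
    rw [← Real.cos_neg]
    exact Real.cos_neg_of_pi_div_two_lt_of_lt (by linarith) (by linarith)
  · exact absurd h hne1
  rcases lt_trichotomy u (π / 2) with h' | h' | h'
  · exact Or.inl ⟨Real.cos_pos_of_mem_Ioo ⟨h, h'⟩, h, h'⟩
  · exact absurd h' hne2
  · exact Or.inr ⟨Real.cos_neg_of_pi_div_two_lt_of_lt h' (by linarith), Or.inr h'⟩

variable {n : ℕ}

/-- rotation by angle `α` in the plane spanned by `e₁, e₂`, as a linear map. -/
def rotMap (e₁ e₂ : EuclideanSpace ℝ (Fin n)) (α : ℝ) :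
    EuclideanSpace ℝ (Fin n) →ₗ[ℝ] EuclideanSpace ℝ (Fin n) where
  toFun v := v + ((Real.cos α - 1) * ⟪v, e₁⟫ - Real.sin α * ⟪v, e₂⟫) • e₁
      + (Real.sin α * ⟪v, e₁⟫ + (Real.cos α - 1) * ⟪v, e₂⟫) • e₂
  map_add' u v := by
    simp only [inner_add_left]
    module
  map_smul' r v := by
    simp only [real_inner_smul_left, RingHom.id_apply]
    module

section rot

variable {e₁ e₂ : EuclideanSpace ℝ (Fin n)}
  (h11 : ⟪e₁, e₁⟫ = 1) (h22 : ⟪e₂, e₂⟫ = 1) (h12 : ⟪e₁, e₂⟫ = 0)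

include h11 h12 in
lemma rotMap_inner₁ (α : ℝ) (v : EuclideanSpace ℝ (Fin n)) :
    ⟪rotMap e₁ e₂ α v, e₁⟫ = Real.cos α * ⟪v, e₁⟫ - Real.sin α * ⟪v, e₂⟫ := by
  have h21 : ⟪e₂, e₁⟫ = 0 := by rw [real_inner_comm]; exact h12
  simp only [rotMap, LinearMap.coe_mk, AddHom.coe_mk, inner_add_left, real_inner_smul_left,
    h11, h21]
  ring

include h22 h12 in
lemma rotMap_inner₂ (α : ℝ) (v : EuclideanSpace ℝ (Fin n)) :
    ⟪rotMap e₁ e₂ α v, e₂⟫ = Real.sin α * ⟪v, e₁⟫ + Real.cos α * ⟪v, e₂⟫ := by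
  simp only [rotMap, LinearMap.coe_mk, AddHom.coe_mk, inner_add_left, real_inner_smul_left,
    h22, h12]
  ring

include h11 h22 h12 in
lemma rotMap_norm (α : ℝ) (v : EuclideanSpace ℝ (Fin n)) :
    ‖rotMap e₁ e₂ α v‖ = ‖v‖ := by
  have h21 : ⟪e₂, e₁⟫ = 0 := by rw [real_inner_comm]; exact h12
  have h1v : ⟪e₁, v⟫ = ⟪v, e₁⟫ := real_inner_comm _ _
  have h2v : ⟪e₂, v⟫ = ⟪v, e₂⟫ := real_inner_comm _ _
  have key : ⟪rotMap e₁ e₂ α v, rotMap e₁ e₂ α v⟫ = ⟪v, v⟫ := by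
    simp only [rotMap, LinearMap.coe_mk, AddHom.coe_mk, inner_add_left, inner_add_right,
      real_inner_smul_left, real_inner_smul_right, h11, h22, h12, h21, h1v, h2v]
    linear_combination (⟪v, e₁⟫ ^ 2 + ⟪v, e₂⟫ ^ 2) * Real.sin_sq_add_cos_sq α
  have h2 := congrArg Real.sqrt key
  rwa [← norm_eq_sqrt_real_inner, ← norm_eq_sqrt_real_inner] at h2

include h11 h22 h12 in
lemma exists_rot (α : ℝ) :
    ∃ O : EuclideanSpace ℝ (Fin n) ≃ₗᵢ[ℝ] EuclideanSpace ℝ (Fin n),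
      ∀ v, ⟪O v, e₁⟫ = Real.cos α * ⟪v, e₁⟫ - Real.sin α * ⟪v, e₂⟫ ∧
        ⟪O v, e₂⟫ = Real.sin α * ⟪v, e₁⟫ + Real.cos α * ⟪v, e₂⟫ := by
  set li : EuclideanSpace ℝ (Fin n) →ₗᵢ[ℝ] EuclideanSpace ℝ (Fin n) :=
    ⟨rotMap e₁ e₂ α, rotMap_norm h11 h22 h12 α⟩ with hli
  refine ⟨li.toLinearIsometryEquiv rfl, fun v => ?_⟩
  have : (li.toLinearIsometryEquiv rfl) v = rotMap e₁ e₂ α v := by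
    rw [LinearIsometry.coe_toLinearIsometryEquiv]; rfl
  rw [this]
  exact ⟨rotMap_inner₁ h11 h12 α v, rotMap_inner₂ h22 h12 α v⟩

end rot

lemma aux (μ : Measure (EuclideanSpace ℝ (Fin n))) [IsProbabilityMeasure μ]
    (hrot : ∀ O : EuclideanSpace ℝ (Fin n) ≃ₗᵢ[ℝ] EuclideanSpace ℝ (Fin n), μ.map O = μ)
    (e₁ e₂ : EuclideanSpace ℝ (Fin n))
    (h11 : ⟪e₁, e₁⟫ = 1) (h22 : ⟪e₂, e₂⟫ = 1) (h12 : ⟪e₁, e₂⟫ = 0)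
    (θ : ℝ) (hθ0 : 0 < θ) (hθπ : θ < π)
    (h1 : μ {v | ⟪v, e₁⟫ = 0} = 0) :
    μ {v | Real.sign ⟪v, e₁⟫
        = Real.sign (Real.cos θ * ⟪v, e₁⟫ + Real.sin θ * ⟪v, e₂⟫)}
      = ENNReal.ofReal (1 - θ / π) := by
  classical
  have hπ : (0 : ℝ) < π := pi_pos
  -- the complex projection
  set G : EuclideanSpace ℝ (Fin n) → ℂ :=
    fun v => (⟪v, e₁⟫ : ℝ) + (⟪v, e₂⟫ : ℝ) * Complex.I with hGdef
  have hG : Measurable G := by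
    have c1 : Continuous fun v : EuclideanSpace ℝ (Fin n) => ⟪v, e₁⟫ :=
      continuous_id.inner continuous_const
    have c2 : Continuous fun v : EuclideanSpace ℝ (Fin n) => ⟪v, e₂⟫ :=
      continuous_id.inner continuous_const
    exact ((Complex.continuous_ofReal.comp c1).add
      ((Complex.continuous_ofReal.comp c2).mul continuous_const)).measurable
  set Φ : EuclideanSpace ℝ (Fin n) → Real.Angle :=
    fun v => ((Complex.arg (G v) : ℝ) : Real.Angle) with hΦdef
  have hΦ : Measurable Φ :=
    Real.Angle.continuous_coe.measurable.comp (Complex.measurable_arg.comp hG)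
  set ν : Measure Real.Angle := μ.map Φ with hνdef
  haveI : IsProbabilityMeasure ν := Measure.isProbabilityMeasure_map hΦ.aemeasurable
  -- a.e. nonvanishing
  have hG0 : μ {v | G v = 0} = 0 := by
    refine measure_mono_null (fun v hv => ?_) h1
    have := congrArg Complex.re hv
    simpa [hGdef] using this
  have hGne : ∀ᵐ v ∂μ, G v ≠ 0 := by
    rw [ae_iff]
    simpa using hG0
  -- rotation invariance of ν
  have hinv : ∀ α : ℝ, ν.map (fun ψ => (α : Real.Angle) + ψ) = ν := by
    intro α
    obtain ⟨O, hO⟩ := exists_rot h11 h22 h12 α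
    have hOmeas : Measurable O := O.continuous.measurable
    have hmap : μ.map (Φ ∘ O) = ν := by
      rw [← Measure.map_map hΦ hOmeas, hrot O]
    have key : (fun v => (α : Real.Angle) + Φ v) =ᵐ[μ] Φ ∘ O := by
      filter_upwards [hGne] with v hv
      have hGO : G (O v) = ((Real.cos α : ℂ) + (Real.sin α : ℂ) * Complex.I) * G v := by
        simp only [hGdef, (hO v).1, (hO v).2]
        simp only [Complex.ext_iff, Complex.add_re, Complex.add_im, Complex.mul_re,
          Complex.mul_im, Complex.ofReal_re, Complex.ofReal_im, Complex.I_re, Complex.I_im]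
        constructor <;> ring
      have hz : ((Real.cos α : ℂ) + (Real.sin α : ℂ) * Complex.I) ≠ 0 := by
        intro h
        have habs : ‖((Real.cos α : ℂ) + (Real.sin α : ℂ) * Complex.I)‖ = 1 := by
          rw [Complex.norm_def, Complex.normSq_add_mul_I, Real.cos_sq_add_sin_sq,
            Real.sqrt_one]
        rw [h] at habs
        simp at habs
      show (α : Real.Angle) + Φ v = Φ (O v)
      simp only [hΦdef]
      rw [hGO, Complex.arg_mul_coe_angle hz hv]
      have harg : ((Complex.arg ((Real.cos α : ℂ) + (Real.sin α : ℂ) * Complex.I) : ℝ)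
          : Real.Angle) = (α : Real.Angle) := by
        have h2 := Complex.arg_cos_add_sin_mul_I_coe_angle (α : Real.Angle)
        rwa [Real.Angle.cos_coe, Real.Angle.sin_coe] at h2
      rw [harg]
    calc ν.map (fun ψ => (α : Real.Angle) + ψ)
        = μ.map ((fun ψ => (α : Real.Angle) + ψ) ∘ Φ) :=
          Measure.map_map (measurable_const_add _) hΦ
      _ = μ.map (Φ ∘ O) := Measure.map_congr key
      _ = ν := hmap
  haveI hlinv : ν.IsAddLeftInvariant := by
    constructor
    intro g
    induction g using Real.Angle.induction_on with
    | _ α => exact hinv α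
  -- ν is `(2π)⁻¹` times the volume
  have hν_eq : ν = (ENNReal.ofReal (2 * π))⁻¹ • (volume : Measure Real.Angle) := by
    have h₁ := Measure.addHaarMeasure_unique ν ⊤
    have h₂ := Measure.addHaarMeasure_unique (volume : Measure Real.Angle) ⊤
    rw [TopologicalSpace.PositiveCompacts.coe_top, measure_univ, one_smul] at h₁
    have hvol : (volume : Measure Real.Angle) Set.univ = ENNReal.ofReal (2 * π) :=
      AddCircle.measure_univ (2 * π)
    rw [TopologicalSpace.PositiveCompacts.coe_top, hvol] at h₂
    rw [h₁, h₂, smul_smul, ENNReal.inv_mul_cancel (ENNReal.ofReal_pos.mpr (by linarith)).ne' ENNReal.ofReal_ne_top, one_smul]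
  -- the target arc set
  set S : Set Real.Angle :=
    {ψ | Real.sign ψ.cos = Real.sign (ψ - (θ : Real.Angle)).cos} with hSdef
  have hmeasS : MeasurableSet S := by
    apply measurableSet_eq_fun
    · exact measurable_sign.comp Real.Angle.continuous_cos.measurable
    · exact measurable_sign.comp
        (Real.Angle.continuous_cos.measurable.comp
          ((continuous_id.sub continuous_const).measurable))
  -- membership of coerced reals in S
  have hmemS : ∀ φ : ℝ, ((φ : Real.Angle) ∈ S ↔
      Real.sign (Real.cos φ) = Real.sign (Real.cos (φ - θ))) := by
    intro φ
    simp only [hSdef, mem_setOf_eq, ← Real.Angle.coe_sub, Real.Angle.cos_coe]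
  -- event = preimage of S, a.e.
  have hAS : μ {v | Real.sign ⟪v, e₁⟫
      = Real.sign (Real.cos θ * ⟪v, e₁⟫ + Real.sin θ * ⟪v, e₂⟫)} = ν S := by
    rw [hνdef, Measure.map_apply hΦ hmeasS]
    apply measure_congr
    rw [Filter.eventuallyEq_set]
    filter_upwards [hGne] with v hv
    have hre : (G v).re = ⟪v, e₁⟫ := by simp [hGdef]
    have him : (G v).im = ⟪v, e₂⟫ := by simp [hGdef]
    have habs : 0 < ‖G v‖ := norm_pos_iff.mpr hv
    have hcosa : ⟪v, e₁⟫ = ‖G v‖ * Real.cos (Complex.arg (G v)) := by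
      rw [Complex.cos_arg hv, hre]
      field_simp
    have hcosb : Real.cos θ * ⟪v, e₁⟫ + Real.sin θ * ⟪v, e₂⟫
        = ‖G v‖ * Real.cos (Complex.arg (G v) - θ) := by
      rw [Real.cos_sub, Complex.cos_arg hv, Complex.sin_arg, hre, him]
      field_simp
    simp only [mem_setOf_eq, mem_preimage, hΦdef]
    rw [hmemS, hcosb, hcosa, sign_pos_mul habs, sign_pos_mul habs]
  -- the volume of S
  have hvolS : (volume : Measure Real.Angle) S = ENNReal.ofReal (2 * π - 2 * θ) := by
    have hproj : (volume : Measure Real.Angle) S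
        = (volume : Measure ℝ) (QuotientAddGroup.mk ⁻¹' S ∩ Ioc (-(π / 2)) (-(π / 2) + 2 * π)) :=
      AddCircle.add_projection_respects_measure (T := 2 * π) (-(π / 2)) hmeasS
    rw [hproj]
    set U : Set ℝ := Ioo (θ - π / 2) (π / 2) ∪ Ioo (θ + π / 2) (-(π / 2) + 2 * π) with hUdef
    set F : Set ℝ := {π / 2, -(π / 2) + 2 * π, θ - π / 2, θ + π / 2} with hFdef
    have hUW : U ⊆ QuotientAddGroup.mk ⁻¹' S ∩ Ioc (-(π / 2)) (-(π / 2) + 2 * π) := by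
      rintro φ (⟨hl, hr⟩ | ⟨hl, hr⟩)
      · constructor
        · show (φ : Real.Angle) ∈ S
          rw [hmemS]
          rw [Real.sign_of_pos (Real.cos_pos_of_mem_Ioo ⟨by linarith, hr⟩),
            Real.sign_of_pos (Real.cos_pos_of_mem_Ioo ⟨by linarith, by linarith⟩)]
        · exact ⟨by linarith, by linarith⟩
      · constructor
        · show (φ : Real.Angle) ∈ S
          rw [hmemS]
          rw [Real.sign_of_neg
              (Real.cos_neg_of_pi_div_two_lt_of_lt (by linarith) (by linarith)),
            Real.sign_of_neg
              (Real.cos_neg_of_pi_div_two_lt_of_lt (by linarith) (by linarith))]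
        · exact ⟨by linarith, by linarith⟩
    have hWU : QuotientAddGroup.mk ⁻¹' S ∩ Ioc (-(π / 2)) (-(π / 2) + 2 * π) ⊆ U ∪ F := by
      rintro φ ⟨hφS, hwl, hwr⟩
      by_cases hF : φ ∈ F
      · exact Or.inr hF
      left
      simp only [hFdef, mem_insert_iff, mem_singleton_iff, not_or] at hF
      obtain ⟨hne1, hne2, hne3, hne4⟩ := hF
      have hwr' : φ < -(π / 2) + 2 * π := lt_of_le_of_ne hwr hne2
      have hsign : Real.sign (Real.cos φ) = Real.sign (Real.cos (φ - θ)) :=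
        (hmemS φ).mp hφS
      have hcase1 := cos_sign_cases (u := φ) (by linarith) (by linarith)
        (by intro h; linarith) hne1
      have hcase2 := cos_sign_cases (u := φ - θ) (by linarith) (by linarith)
        (by intro h; apply hne3; linarith) (by intro h; apply hne4; linarith)
      rcases hcase1 with ⟨hp1, hb1, hb1'⟩ | ⟨hn1, hd1⟩
      · rcases hcase2 with ⟨hp2, hb2, hb2'⟩ | ⟨hn2, _⟩
        · exact Or.inl ⟨by linarith, hb1'⟩
        · rw [Real.sign_of_pos hp1, Real.sign_of_neg hn2] at hsign
          norm_num at hsign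
      · rcases hcase2 with ⟨hp2, _, _⟩ | ⟨hn2, hd2⟩
        · rw [Real.sign_of_neg hn1, Real.sign_of_pos hp2] at hsign
          norm_num at hsign
        · have hgt : π / 2 < φ := by
            rcases hd1 with h | h
            · linarith
            · exact h
          have hgt2 : θ + π / 2 < φ := by
            rcases hd2 with h | h
            · linarith
            · linarith
          exact Or.inr ⟨hgt2, hwr'⟩
    have hF0 : (volume : Measure ℝ) F = 0 := (Set.toFinite F).measure_zero _
    have hdisj : Disjoint (Ioo (θ - π / 2) (π / 2)) (Ioo (θ + π / 2) (-(π / 2) + 2 * π)) := by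
      rw [Set.disjoint_left]
      rintro φ ⟨_, h2⟩ ⟨h3, _⟩
      linarith
    have hvolU : (volume : Measure ℝ) U = ENNReal.ofReal (2 * π - 2 * θ) := by
      rw [hUdef, measure_union hdisj measurableSet_Ioo, Real.volume_Ioo, Real.volume_Ioo,
        show π / 2 - (θ - π / 2) = π - θ by ring,
        show -(π / 2) + 2 * π - (θ + π / 2) = π - θ by ring,
        ← ENNReal.ofReal_add (by linarith) (by linarith)]
      congr 1
      ring
    refine le_antisymm ?_ ?_
    · calc (volume : Measure ℝ) (QuotientAddGroup.mk ⁻¹' S ∩ Ioc (-(π / 2)) (-(π / 2) + 2 * π))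
          ≤ (volume : Measure ℝ) (U ∪ F) := measure_mono hWU
        _ ≤ (volume : Measure ℝ) U + (volume : Measure ℝ) F := measure_union_le _ _
        _ = ENNReal.ofReal (2 * π - 2 * θ) := by rw [hF0, hvolU, add_zero]
    · rw [← hvolU]
      exact measure_mono hUW
  -- put everything together
  rw [hAS, hν_eq]
  simp only [Measure.smul_apply, smul_eq_mul]
  have h1θ : (0:ℝ) ≤ 1 - θ / π := by
    rw [sub_nonneg, div_le_one hπ]; linarith
  have hsplit : 2 * π - 2 * θ = (1 - θ / π) * (2 * π) := by
    field_simp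
  rw [hvolS, hsplit, ENNReal.ofReal_mul h1θ,
    mul_comm (ENNReal.ofReal (1 - θ / π)) (ENNReal.ofReal (2 * π)), ← mul_assoc,
    ENNReal.inv_mul_cancel (ENNReal.ofReal_pos.mpr (by linarith)).ne' ENNReal.ofReal_ne_top,
    one_mul]

end SignProjAux

section Main

local notation "⟪" x ", " y "⟫" => @inner ℝ _ _ x y

open SignProjAux

set_option maxHeartbeats 2000000 in
/-- Sign-projection collision probability: for `v` drawn from a rotationally
invariant distribution, `P[sign⟨v,x⟩ = sign⟨v,y⟩] = 1 - θ(x,y)/π`. -/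
theorem sign_projection_collision (n : ℕ)
    (μ : MeasureTheory.Measure (EuclideanSpace ℝ (Fin n)))
    [MeasureTheory.IsProbabilityMeasure μ]
    (hrot : ∀ O : EuclideanSpace ℝ (Fin n) ≃ₗᵢ[ℝ] EuclideanSpace ℝ (Fin n),
      μ.map O = μ)
    (x y : EuclideanSpace ℝ (Fin n)) (hx : x ≠ 0) (hy : y ≠ 0)
    (hopp : ¬∃ t : ℝ, t < 0 ∧ y = t • x)
    (hμx : μ {v | (inner ℝ v x : ℝ) = 0} = 0)
    (hμy : μ {v | (inner ℝ v y : ℝ) = 0} = 0) :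
    μ {v | Real.sign (inner ℝ v x : ℝ) = Real.sign (inner ℝ v y : ℝ)}
      = ENNReal.ofReal
          (1 - Real.arccos ((inner ℝ x y : ℝ) / (‖x‖ * ‖y‖)) / Real.pi) := by
  classical
  have hπ : (0:ℝ) < π := Real.pi_pos
  have hxn : (0:ℝ) < ‖x‖ := norm_pos_iff.mpr hx
  have hyn : (0:ℝ) < ‖y‖ := norm_pos_iff.mpr hy
  by_cases hcol : ∃ t : ℝ, y = t • x
  · obtain ⟨t, rfl⟩ := hcol
    have ht0 : t ≠ 0 := by rintro rfl; simp at hy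
    have htpos : 0 < t := by
      rcases lt_trichotomy t 0 with h | h | h
      · exact absurd ⟨t, h, rfl⟩ hopp
      · exact absurd h ht0
      · exact h
    have hevent : {v : EuclideanSpace ℝ (Fin n) |
        Real.sign (inner ℝ v x : ℝ) = Real.sign (inner ℝ v (t • x) : ℝ)} = Set.univ := by
      ext v
      simp only [Set.mem_setOf_eq, Set.mem_univ, iff_true]
      rw [real_inner_smul_right, sign_pos_mul htpos]
    have hr : ((inner ℝ x (t • x) : ℝ) / (‖x‖ * ‖t • x‖)) = 1 := by
      rw [real_inner_smul_right, real_inner_self_eq_norm_mul_norm, norm_smul,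
        Real.norm_eq_abs, abs_of_pos htpos]
      field_simp
    rw [hevent, measure_univ, hr, Real.arccos_one]
    norm_num
  -- main case: `x, y` linearly independent
  push_neg at hcol
  set e₁ : EuclideanSpace ℝ (Fin n) := ‖x‖⁻¹ • x with he₁
  have hxe : x = ‖x‖ • e₁ := by
    rw [he₁, smul_smul, mul_inv_cancel₀ hxn.ne', one_smul]
  have h11 : ⟪e₁, e₁⟫ = 1 := by
    rw [he₁, real_inner_smul_left, real_inner_smul_right, real_inner_self_eq_norm_mul_norm]
    field_simp
  set c : ℝ := ⟪y, e₁⟫ with hc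
  set w : EuclideanSpace ℝ (Fin n) := y - c • e₁ with hw
  have hwy : y = w + c • e₁ := by rw [hw]; abel
  have hwne : w ≠ 0 := by
    intro h
    exact hcol (c * ‖x‖⁻¹) (by rw [hwy, h, zero_add, he₁, smul_smul])
  have hwn : (0:ℝ) < ‖w‖ := norm_pos_iff.mpr hwne
  have hw1 : ⟪w, e₁⟫ = 0 := by
    rw [hw, inner_sub_left, real_inner_smul_left, h11, mul_one, hc, sub_self]
  set e₂ : EuclideanSpace ℝ (Fin n) := ‖w‖⁻¹ • w with he₂
  have h22 : ⟪e₂, e₂⟫ = 1 := by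
    rw [he₂, real_inner_smul_left, real_inner_smul_right, real_inner_self_eq_norm_mul_norm]
    field_simp
  have h12 : ⟪e₁, e₂⟫ = 0 := by
    rw [he₂, real_inner_smul_right, real_inner_comm, hw1, mul_zero]
  have hydecomp : y = c • e₁ + ‖w‖ • e₂ := by
    rw [he₂, smul_inv_smul₀ hwn.ne', hwy]
    abel
  have hynorm : ‖y‖ * ‖y‖ = c * c + ‖w‖ * ‖w‖ := by
    have h21 : ⟪e₂, e₁⟫ = 0 := by rw [real_inner_comm]; exact h12
    have expand : ⟪c • e₁ + ‖w‖ • e₂, c • e₁ + ‖w‖ • e₂⟫ = c * c + ‖w‖ * ‖w‖ := by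
      simp only [inner_add_left, inner_add_right, real_inner_smul_left,
        real_inner_smul_right, h11, h22, h12, h21]
      ring
    rw [← hydecomp, real_inner_self_eq_norm_mul_norm] at expand
    exact expand
  have habs : ∀ a b R : ℝ, 0 < R → 0 < b → R * R = a * a + b * b → a < R ∧ -R < a := by
    intro a b R hR hb h
    constructor <;> nlinarith
  set r : ℝ := c / ‖y‖ with hrdef
  obtain ⟨hclt1, hclt2⟩ := habs c ‖w‖ ‖y‖ hyn hwn hynorm
  have hr1 : -1 < r := by rw [hrdef, lt_div_iff₀ hyn]; linarith
  have hr2 : r < 1 := by rw [hrdef, div_lt_one hyn]; linarith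
  set θ : ℝ := Real.arccos r with hθdef
  have hθ0 : 0 < θ := Real.arccos_pos.mpr hr2
  have hcosθ : Real.cos θ = r := Real.cos_arccos hr1.le hr2.le
  have hθπ : θ < π := by
    rcases lt_or_eq_of_le (Real.arccos_le_pi r) with h | h
    · exact h
    · exfalso
      rw [← hθdef] at h
      rw [h, Real.cos_pi] at hcosθ
      linarith
  have hsinθ : Real.sin θ = ‖w‖ / ‖y‖ := by
    rw [hθdef, Real.sin_arccos]
    have key : ∀ a b R : ℝ, 0 < R → R * R = a * a + b * b →
        1 - (a / R) ^ 2 = (b / R) ^ 2 := by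
      intro a b R hR h
      field_simp
      nlinarith [h]
    have hsq : 1 - r ^ 2 = (‖w‖ / ‖y‖) ^ 2 := by
      rw [hrdef]
      exact key c ‖w‖ ‖y‖ hyn hynorm
    rw [hsq, Real.sqrt_sq (by positivity)]
  have hcc : c = ‖y‖ * Real.cos θ := by rw [hcosθ, hrdef]; field_simp
  have hww : ‖w‖ = ‖y‖ * Real.sin θ := by rw [hsinθ]; field_simp
  have hxy : (inner ℝ x y : ℝ) = ‖x‖ * c := by
    conv_lhs => rw [hxe]
    rw [real_inner_smul_left, real_inner_comm]
  have hratio : (inner ℝ x y : ℝ) / (‖x‖ * ‖y‖) = r := by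
    rw [hxy, hrdef]
    field_simp
  have hvx : ∀ v : EuclideanSpace ℝ (Fin n), (inner ℝ v x : ℝ) = ‖x‖ * ⟪v, e₁⟫ := by
    intro v
    conv_lhs => rw [hxe]
    rw [real_inner_smul_right]
  have hvy : ∀ v : EuclideanSpace ℝ (Fin n),
      (inner ℝ v y : ℝ) = ‖y‖ * (Real.cos θ * ⟪v, e₁⟫ + Real.sin θ * ⟪v, e₂⟫) := by
    intro v
    conv_lhs => rw [hydecomp]
    simp only [inner_add_right, real_inner_smul_right]
    rw [hcc, hww]
    ring
  have hset : {v : EuclideanSpace ℝ (Fin n) |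
        Real.sign (inner ℝ v x : ℝ) = Real.sign (inner ℝ v y : ℝ)}
      = {v : EuclideanSpace ℝ (Fin n) | Real.sign ⟪v, e₁⟫
          = Real.sign (Real.cos θ * ⟪v, e₁⟫ + Real.sin θ * ⟪v, e₂⟫)} := by
    ext v
    simp only [Set.mem_setOf_eq, hvx v, hvy v, sign_pos_mul hxn, sign_pos_mul hyn]
  have h1 : μ {v : EuclideanSpace ℝ (Fin n) | ⟪v, e₁⟫ = 0} = 0 := by
    refine MeasureTheory.measure_mono_null (fun v hv => ?_) hμx
    simp only [Set.mem_setOf_eq] at hv ⊢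
    rw [hvx v, hv, mul_zero]
  rw [hset, hratio, ← hθdef]
  exact SignProjAux.aux μ hrot e₁ e₂ h11 h22 h12 θ hθ0 hθπ h1

end Main
end
end
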